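/- Let n > r ≥ 1 be integers and let G be a finite simple undirected graph on a vertex set V of cardinality n. Suppose there is a subset V_c ⊆ V with |V_c| = r such that every vertex of V_c is adjacent (in G) to every other vertex of V. Then G is ⌈(r+1)/2⌉-robust. -/
import Mathlib


/-- A graph `G` on vertex set `V` is `r`-robust if for every pair of nonempty
disjoint subsets `S₁, S₂ ⊆ V`, there exist `k ∈ {1,2}` and a vertex `i ∈ S_k`
having at least `r` neighbors outside `S_k`. -/
def IsRobust {V : Type*} (G : SimpleGraph V) (r : ℕ) : Prop :=
  ∀ S₁ S₂ : Set V, S₁.Nonempty → S₂.Nonempty → Disjoint S₁ S₂ →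
    (∃ i ∈ S₁, r ≤ (G.neighborSet i \ S₁).ncard) ∨
    (∃ i ∈ S₂, r ≤ (G.neighborSet i \ S₂).ncard)


/-!
STATEMENT 9: Let n > r ≥ 1 and let G be a graph on a vertex set V with |V| = n.
Suppose there is V_c ⊆ V with |V_c| = r such that every vertex of V_c is adjacent
to every other vertex of V.  Then G is ⌈(r+1)/2⌉-robust.
(For a natural number r, ⌈(r+1)/2⌉ = (r + 2) / 2 in natural-number division.)
-/

theorem isRobust_of_core {V : Type*} [Fintype V] [DecidableEq V]
    (G : SimpleGraph V) (n r : ℕ) (hr : 1 ≤ r) (hrn : r < n)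
    (hcard : Fintype.card V = n)
    (Vc : Finset V) (hVc : Vc.card = r)
    (hadj : ∀ i ∈ Vc, ∀ j : V, j ≠ i → G.Adj i j) :
    IsRobust G ((r + 2) / 2) := by
  classical
  intro S₁ S₂ hS₁ hS₂ hdisj
  set m := (r + 2) / 2 with hm
  have hmr : m ≤ r := by omega
  -- any vertex of S has at least |Vc \ S| neighbors outside S
  have key : ∀ (S : Set V), ∀ i ∈ S,
      ((Vc : Set V) \ S).ncard ≤ (G.neighborSet i \ S).ncard := by
    intro S i hi
    apply Set.ncard_le_ncard _ (Set.toFinite _)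
    intro j hj
    exact ⟨(hadj j hj.1 i (fun h => hj.2 (h ▸ hi))).symm, hj.2⟩
  by_cases h1 : m ≤ ((Vc : Set V) \ S₁).ncard
  · obtain ⟨i, hi⟩ := hS₁
    exact Or.inl ⟨i, hi, h1.trans (key S₁ i hi)⟩
  by_cases h2 : m ≤ ((Vc : Set V) \ S₂).ncard
  · obtain ⟨i, hi⟩ := hS₂
    exact Or.inr ⟨i, hi, h2.trans (key S₂ i hi)⟩
  push_neg at h1 h2
  have hVcr : ((Vc : Set V)).ncard = r := by rw [Set.ncard_coe_finset, hVc]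
  -- hence Vc meets both S₁ and S₂
  have hmeet : ∀ (S : Set V), ((Vc : Set V) \ S).ncard < m →
      ∃ i ∈ Vc, i ∈ S := by
    intro S hS
    by_contra h
    push_neg at h
    have : (Vc : Set V) \ S = (Vc : Set V) := by
      exact Set.Subset.antisymm Set.diff_subset (fun x hx => ⟨hx, h x hx⟩)
    rw [this, hVcr] at hS
    omega
  obtain ⟨i, hiVc, hiS⟩ := hmeet S₁ h1
  obtain ⟨j, hjVc, hjS⟩ := hmeet S₂ h2
  -- a core vertex in S has exactly n - |S| neighbors outside S
  have hnbr : ∀ k ∈ Vc, G.neighborSet k = {k}ᶜ := by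
    intro k hk
    ext x
    simp only [SimpleGraph.mem_neighborSet, Set.mem_compl_iff, Set.mem_singleton_iff]
    exact ⟨fun h => h.ne', fun h => hadj k hk x h⟩
  have hcnt : ∀ (S : Set V), ∀ k, k ∈ Vc → k ∈ S →
      (G.neighborSet k \ S).ncard = n - S.ncard := by
    intro S k hkVc hkS
    have hset : G.neighborSet k \ S = Sᶜ := by
      rw [hnbr k hkVc]
      ext x
      simp only [Set.mem_diff, Set.mem_compl_iff, Set.mem_singleton_iff]
      exact ⟨fun h => h.2, fun h => ⟨fun he => h (he ▸ hkS), h⟩⟩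
    have hc := Set.ncard_add_ncard_compl S
    rw [hset]
    simp only [Nat.card_eq_fintype_card, hcard] at hc
    omega
  have hsum : S₁.ncard + S₂.ncard ≤ n := by
    have h1 : (S₁ ∪ S₂).ncard = S₁.ncard + S₂.ncard :=
      Set.ncard_union_eq hdisj (Set.toFinite _) (Set.toFinite _)
    have h2 : (S₁ ∪ S₂).ncard ≤ (Set.univ : Set V).ncard :=
      Set.ncard_le_ncard (Set.subset_univ _) (Set.toFinite _)
    rw [h1] at h2
    rwa [Set.ncard_univ, Nat.card_eq_fintype_card, hcard] at h2
  have e1 := hcnt S₁ i hiVc hiS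
  have e2 := hcnt S₂ j hjVc hjS
  by_cases hfin : m ≤ n - S₁.ncard
  · exact Or.inl ⟨i, hiS, by omega⟩
  · refine Or.inr ⟨j, hjS, ?_⟩
    have hs1 : S₁.ncard ≤ n := by omega
    omega
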